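/- With the setup of the SPGM lower bound construction, if n ≤ i < j ≤ N then τ_{n,i}(δ_i − 1)η_i ≤ τ_{n,j}(δ_j − 1)η_j and δ_j η_j ≤ (δ_i − 1)η_i. -/

import Mathlib

private lemma aux1 (t : ℝ) (ht : 0 < t) :
    1 < 1 + Real.sqrt (1 + 2 * t) ∧
    (1 + Real.sqrt (1 + 2 * t)) ^ 2 = 2 * (1 + Real.sqrt (1 + 2 * t)) + 2 * t := by
  have h0 : (0:ℝ) < 1 + 2 * t := by linarith
  have hs : Real.sqrt (1 + 2 * t) ^ 2 = 1 + 2 * t := Real.sq_sqrt h0.le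
  have hs0 : 0 < Real.sqrt (1 + 2 * t) := Real.sqrt_pos.mpr h0
  exact ⟨by linarith, by nlinarith⟩

private lemma aux2 (t : ℝ) (ht : 0 < t) :
    1 < (1 + Real.sqrt (1 + 4 * t)) / 2 ∧
    ((1 + Real.sqrt (1 + 4 * t)) / 2) ^ 2 = (1 + Real.sqrt (1 + 4 * t)) / 2 + t := by
  have h0 : (0:ℝ) < 1 + 4 * t := by linarith
  have hs : Real.sqrt (1 + 4 * t) ^ 2 = 1 + 4 * t := Real.sq_sqrt h0.le
  have hs0 : 0 ≤ Real.sqrt (1 + 4 * t) := Real.sqrt_nonneg _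
  have hs1 : 1 < Real.sqrt (1 + 4 * t) := by nlinarith
  exact ⟨by linarith, by nlinarith⟩

theorem eta_monotonicity (N n : ℕ) (hnN : n ≤ N) (τhalf : ℝ) (hτ : 0 < τhalf)
    (δ τ η : ℕ → ℝ)
    (hδ : ∀ i, n ≤ i → i ≤ N →
      δ i = if i < N then 1 + Real.sqrt (1 + 2 * (if i = n then τhalf else τ (i - 1)))
            else (1 + Real.sqrt (1 + 4 * (if i = n then τhalf else τ (i - 1)))) / 2)
    (hτrec : ∀ i, n ≤ i → i ≤ N →
      τ i = (if i = n then τhalf else τ (i - 1)) + δ i)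
    (hηn : η n = 1 / (2 * τhalf * δ n))
    (hηi : ∀ i, n < i → i ≤ N →
      η i = (1 + ∑ j ∈ Finset.Ico n i, (δ j) ^ 2 * η j) / (2 * τ (i - 1) * δ i)) :
    ∀ i j, n ≤ i → i < j → j ≤ N →
      τ i * (δ i - 1) * η i ≤ τ j * (δ j - 1) * η j ∧
      δ j * η j ≤ (δ i - 1) * η i := by
  -- main invariant
  have main : ∀ i, n ≤ i → i ≤ N →
      0 < (if i = n then τhalf else τ (i - 1)) ∧ 1 < δ i ∧ 0 < τ i ∧ 0 < η i ∧
      2 * (if i = n then τhalf else τ (i - 1)) * δ i * η i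
        = 1 + ∑ j ∈ Finset.Ico n i, (δ j) ^ 2 * η j ∧
      τ i = (if i = n then τhalf else τ (i - 1)) + δ i ∧
      (i < N → δ i ^ 2 = 2 * δ i + 2 * (if i = n then τhalf else τ (i - 1))) ∧
      (i = N → δ i ^ 2 = δ i + (if i = n then τhalf else τ (i - 1))) := by
    intro i hi
    induction i, hi using Nat.le_induction with
    | base =>
      intro hN
      simp only [eq_self_iff_true, if_true]
      have hδn := hδ n le_rfl hN
      simp only [eq_self_iff_true, if_true] at hδn
      have hτn := hτrec n le_rfl hN
      simp only [eq_self_iff_true, if_true] at hτn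
      have hδ1 : 1 < δ n := by
        by_cases h : n < N
        · rw [hδn, if_pos h]; exact (aux1 τhalf hτ).1
        · rw [hδn, if_neg h]; exact (aux2 τhalf hτ).1
      have hd0 : (0:ℝ) < δ n := by linarith
      refine ⟨hτ, hδ1, by rw [hτn]; linarith, ?_, ?_, hτn, ?_, ?_⟩
      · rw [hηn]
        exact div_pos one_pos (mul_pos (by linarith) hd0)
      · rw [hηn, Finset.Ico_self, Finset.sum_empty]
        have h1 : τhalf ≠ 0 := ne_of_gt hτ
        have h2 : δ n ≠ 0 := ne_of_gt hd0
        field_simp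
        norm_num
      · intro h; rw [hδn, if_pos h]; exact (aux1 τhalf hτ).2
      · intro h; rw [hδn, if_neg (by omega)]; exact (aux2 τhalf hτ).2
    | succ i hi ih =>
      intro hiN1
      have hiN : i ≤ N := by omega
      obtain ⟨hpi, hδi, hτi, hηi', hSi, hτeq, hsq, _⟩ := ih hiN
      have hne : ¬ (i + 1 = n) := by omega
      simp only [if_neg hne, Nat.add_sub_cancel]
      have hδs := hδ (i+1) (by omega) hiN1
      simp only [if_neg hne, Nat.add_sub_cancel] at hδs
      have hτs := hτrec (i+1) (by omega) hiN1
      simp only [if_neg hne, Nat.add_sub_cancel] at hτs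
      have hηs := hηi (i+1) (by omega) hiN1
      simp only [Nat.add_sub_cancel] at hηs
      have hδ1' : 1 < δ (i+1) := by
        by_cases h : i + 1 < N
        · rw [hδs, if_pos h]; exact (aux1 (τ i) hτi).1
        · rw [hδs, if_neg h]; exact (aux2 (τ i) hτi).1
      have hδipos : (0:ℝ) < δ i := by linarith
      have hpos : 0 < 1 + ∑ j ∈ Finset.Ico n (i+1), (δ j) ^ 2 * η j := by
        rw [Finset.sum_Ico_succ_top hi, ← add_assoc, ← hSi]
        nlinarith [mul_pos (mul_pos hpi hδipos) hηi',
          mul_pos (mul_pos hδipos hδipos) hηi']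
      have hden : (0:ℝ) < 2 * τ i * δ (i+1) := by
        apply mul_pos (by linarith) (by linarith)
      have hη1' : 0 < η (i+1) := by
        rw [hηs]; exact div_pos hpos hden
      refine ⟨hτi, hδ1', by rw [hτs]; linarith, hη1', ?_, hτs, ?_, ?_⟩
      · rw [hηs]
        have h1 : τ i ≠ 0 := ne_of_gt hτi
        have h2 : δ (i+1) ≠ 0 := by positivity
        field_simp
      · intro h; rw [hδs, if_pos h]; exact (aux1 (τ i) hτi).2
      · intro h; rw [hδs, if_neg (by omega)]; exact (aux2 (τ i) hτi).2
  -- key recursion identity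
  have keyE : ∀ i, n ≤ i → i + 1 ≤ N → δ (i+1) * η (i+1) = (δ i - 1) * η i := by
    intro i hi h1
    obtain ⟨hpi, hδi, hτi, hηi', hSi, hτeq, hsq, _⟩ := main i hi (by omega)
    obtain ⟨_, hδ1', hτ1', hη1', hS1', hτeq', _, _⟩ := main (i+1) (by omega) h1
    rw [if_neg (show ¬(i+1 = n) by omega), Nat.add_sub_cancel] at hS1'
    have hsq' := hsq (by omega)
    rw [Finset.sum_Ico_succ_top hi, ← add_assoc, ← hSi, hτeq] at hS1'
    have hd2 : (δ i) ^ 2 ≠ 0 := pow_ne_zero 2 (by linarith)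
    refine mul_left_cancel₀ hd2 ?_
    linear_combination (δ (i+1) * η (i+1) - δ i * η i) * hsq' + hS1'
  -- step monotonicity for b
  have stepB : ∀ i, n ≤ i → i + 1 ≤ N →
      τ i * (δ i - 1) * η i ≤ τ (i+1) * (δ (i+1) - 1) * η (i+1) := by
    intro i hi h1
    have hE := keyE i hi h1
    obtain ⟨_, _, hτi, hηi', _, _, _, _⟩ := main i hi (by omega)
    obtain ⟨_, hδ1', hτ1', hη1', _, hτeq', hsq1', hsqN'⟩ := main (i+1) (by omega) h1
    rw [if_neg (show ¬(i+1 = n) by omega), Nat.add_sub_cancel] at hτeq' hsq1' hsqN'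
    by_cases hN : i + 1 < N
    · have hsq := hsq1' hN
      have hid : τ (i+1) * (δ (i+1) - 1) = τ i * δ (i+1) + τ (i+1) := by
        linear_combination (δ (i+1) - 2) * hτeq' + hsq
      calc τ i * (δ i - 1) * η i = τ i * (δ (i+1) * η (i+1)) := by rw [hE]; ring
        _ ≤ τ i * (δ (i+1) * η (i+1)) + τ (i+1) * η (i+1) :=
            le_add_of_nonneg_right (mul_nonneg hτ1'.le hη1'.le)
        _ = τ (i+1) * (δ (i+1) - 1) * η (i+1) := by rw [hid]; ring
    · have hsq := hsqN' (by omega)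
      have hid : τ (i+1) * (δ (i+1) - 1) = τ i * δ (i+1) := by
        linear_combination (δ (i+1) - 1) * hτeq' + hsq
      have h2 : τ (i+1) * (δ (i+1) - 1) * η (i+1) = τ i * ((δ i - 1) * η i) := by
        rw [hid, mul_assoc, hE]
      rw [h2, mul_assoc]
  -- step monotonicity for a
  have stepA : ∀ i, n ≤ i → i + 1 ≤ N → δ (i+1) * η (i+1) ≤ δ i * η i := by
    intro i hi h1
    obtain ⟨_, _, _, hηi', _, _, _, _⟩ := main i hi (by omega)
    rw [keyE i hi h1]
    nlinarith [hηi'.le]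
  intro i j hi hij hjN
  constructor
  · have chain : ∀ k, i + 1 ≤ k → k ≤ N →
        τ i * (δ i - 1) * η i ≤ τ k * (δ k - 1) * η k := by
      intro k hk
      induction k, hk using Nat.le_induction with
      | base => intro h; exact stepB i hi h
      | succ k hk ih => intro h; exact (ih (by omega)).trans (stepB k (by omega) h)
    exact chain j hij hjN
  · have chain : ∀ k, i + 1 ≤ k → k ≤ N → δ k * η k ≤ δ (i+1) * η (i+1) := by
      intro k hk
      induction k, hk using Nat.le_induction with
      | base => intro h; exact le_rfl
      | succ k hk ih => intro h; exact (stepA k (by omega) h).trans (ih (by omega))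
    calc δ j * η j ≤ δ (i+1) * η (i+1) := chain j hij hjN
      _ = (δ i - 1) * η i := keyE i hi (by omega)
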